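/- For the OU age-penalty g = h_ℓ with h_ℓ(Δ) = (σ²/(2θ))(1 − (1 − 2^(−2ℓ))e^(−2θΔ)) and a nonnegative random channel delay Y, the threshold waiting rule of Theorem 1 evaluates in closed form to w*(ȳ) = max{ (1/(2θ))·log( (σ²/(2θ))(1 − 2^(−2ℓ))·E[e^(−2θY)] / ((σ²/(2θ)) − λ) ) − ȳ, 0 }, for any λ ∈ (2^(−2ℓ)σ²/(2θ), σ²/(2θ)). -/

import Mathlib

open MeasureTheory

/-- For the OU age-penalty `h_ℓ` and channel delay `Y ≥ 0`, the
threshold of Theorem 1 evaluates in closed form: the point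
`x* = (1/(2θ)) log( (σ²/(2θ))(1 − 2^{−2ℓ}) E[e^{−2θY}] / ((σ²/(2θ)) − λ) ) − ȳ`
satisfies `G_ȳ(x*) = λ`, where `G_ȳ(x) = E[h_ℓ(ȳ + x + Y)]`, for any
`λ ∈ (2^{−2ℓ} σ²/(2θ), σ²/(2θ))`; hence `w*(ȳ) = max(x*, 0)`. -/
theorem stmt14 {Ω : Type*} [MeasurableSpace Ω] (μ : Measure Ω) [IsProbabilityMeasure μ]
    (σ θ : ℝ) (hσ : 0 < σ) (hθ : 0 < θ) (ℓ : ℕ) (hℓ : 1 ≤ ℓ)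
    (Y : Ω → ℝ) (hY0 : ∀ ω, 0 ≤ Y ω)
    (hYint : Integrable (fun ω => Real.exp (-2 * θ * Y ω)) μ)
    (ybar lam : ℝ) (hybar : 0 ≤ ybar)
    (hlam : lam ∈ Set.Ioo ((2 : ℝ) ^ (-(2 * (ℓ : ℤ))) * (σ ^ 2 / (2 * θ)))
      (σ ^ 2 / (2 * θ)))
    (h G : ℝ → ℝ)
    (hh : ∀ Δ : ℝ, h Δ = σ ^ 2 / (2 * θ) *
      (1 - (1 - (2 : ℝ) ^ (-(2 * (ℓ : ℤ)))) * Real.exp (-2 * θ * Δ)))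
    (hG : ∀ x : ℝ, G x = ∫ ω, h (ybar + x + Y ω) ∂μ)
    (xstar : ℝ)
    (hx : xstar = 1 / (2 * θ) *
      Real.log (σ ^ 2 / (2 * θ) * (1 - (2 : ℝ) ^ (-(2 * (ℓ : ℤ)))) *
        (∫ ω, Real.exp (-2 * θ * Y ω) ∂μ) / (σ ^ 2 / (2 * θ) - lam)) - ybar) :
    G xstar = lam := by
  set c : ℝ := σ ^ 2 / (2 * θ) with hc
  set a : ℝ := 1 - (2 : ℝ) ^ (-(2 * (ℓ : ℤ))) with ha
  set E : ℝ := ∫ ω, Real.exp (-2 * θ * Y ω) ∂μ with hE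
  have hc_pos : 0 < c := by positivity
  have hpow_lt : (2 : ℝ) ^ (-(2 * (ℓ : ℤ))) < 1 := by
    rw [zpow_neg]
    rw [inv_lt_one_iff₀]
    right
    have : (2 : ℝ) ^ (2 * (ℓ : ℤ)) = (2 : ℝ) ^ (2 * ℓ : ℕ) := by
      rw [← zpow_natCast]; norm_num
    rw [this]
    exact one_lt_pow₀ (by norm_num) (by omega)
  have ha_pos : 0 < a := by rw [ha]; linarith
  have hE_pos : 0 < E := by
    rw [hE]
    exact integral_exp_pos hYint
  have hcl : 0 < c - lam := by linarith [hlam.2]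
  have hR_pos : 0 < c * a * E / (c - lam) := by positivity
  -- compute exp(-2θ(ybar + xstar))
  have hθ2 : (2 * θ) ≠ 0 := by positivity
  have hexp : Real.exp (-(2 * θ) * (ybar + xstar)) = (c - lam) / (c * a * E) := by
    have : ybar + xstar = 1 / (2 * θ) * Real.log (c * a * E / (c - lam)) := by
      rw [hx]; ring
    rw [this]
    rw [show -(2 * θ) * (1 / (2 * θ) * Real.log (c * a * E / (c - lam)))
        = -Real.log (c * a * E / (c - lam)) by field_simp]
    rw [Real.exp_neg, Real.exp_log hR_pos, inv_div]
  have key : ∀ ω, h (ybar + xstar + Y ω)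
      = c - (c * a * ((c - lam) / (c * a * E))) * Real.exp (-2 * θ * Y ω) := by
    intro ω
    rw [hh]
    have : Real.exp (-2 * θ * (ybar + xstar + Y ω))
        = Real.exp (-(2 * θ) * (ybar + xstar)) * Real.exp (-2 * θ * Y ω) := by
      rw [← Real.exp_add]; ring_nf
    rw [this, hexp]
    ring
  rw [hG]
  simp only [key]
  rw [integral_sub (integrable_const c) (hYint.const_mul _), integral_const,
    integral_const_mul]
  simp only [measure_univ, probReal_univ, ENNReal.toReal_one, smul_eq_mul, one_mul, ← hE]
  have hcaE : c * a * E ≠ 0 := by positivity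
  field_simp
  ring
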